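/- Let f be a modulus function with lim_{t→∞} f(t)/t > 0. Then AC_θ(f) = AC_θ for every lacunary sequence θ. -/

import Mathlib

open Filter Finset

/-- Membership in the lacunary arithmetic convergence space `AC_θ`,
with lacunary sequence given by `k` (blocks `I_r = (k r, k (r+1)]`,
`h_r = k (r+1) - k r`) and witness integer `n`. -/
def ACtheta (k : ℕ → ℕ) (n : ℕ) (x : ℕ → ℝ) : Prop :=
  Tendsto (fun r => (1 / ((k (r + 1) - k r : ℕ) : ℝ)) *
    ∑ m ∈ Finset.Ioc (k r) (k (r + 1)), |x m - x (Nat.gcd m n)|) atTop (nhds 0)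

/-- Membership in the strongly Cesàro arithmetic convergence space `AC_{σ₁}`
with witness integer `n`. -/
def ACsigma (n : ℕ) (x : ℕ → ℝ) : Prop :=
  Tendsto (fun t : ℕ => (1 / (t : ℝ)) *
    ∑ m ∈ Finset.Icc 1 t, |x m - x (Nat.gcd m n)|) atTop (nhds 0)
/-- A modulus function `f : [0,∞) → [0,∞)`. -/
structure IsModulus (f : ℝ → ℝ) : Prop where
  nonneg : ∀ x, 0 ≤ x → 0 ≤ f x
  eq_zero_iff : ∀ x, 0 ≤ x → (f x = 0 ↔ x = 0)
  subadd : ∀ x y, 0 ≤ x → 0 ≤ y → f (x + y) ≤ f x + f y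
  mono : ∀ x y, 0 ≤ x → x ≤ y → f x ≤ f y
  right_cont : ContinuousWithinAt f (Set.Ici 0) 0

/-- Membership in `AC_θ(f)` with witness integer `n`. -/
def ACthetaF (f : ℝ → ℝ) (k : ℕ → ℕ) (n : ℕ) (x : ℕ → ℝ) : Prop :=
  Filter.Tendsto (fun r => (1 / ((k (r + 1) - k r : ℕ) : ℝ)) *
    ∑ m ∈ Finset.Ioc (k r) (k (r + 1)), f |x m - x (Nat.gcd m n)|)
    Filter.atTop (nhds 0)


section Aux

variable {f : ℝ → ℝ}

lemma modulus_f_zero (hf : IsModulus f) : f 0 = 0 :=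
  (hf.eq_zero_iff 0 le_rfl).mpr rfl

lemma modulus_nsmul (hf : IsModulus f) (t : ℝ) (ht : 0 ≤ t) :
    ∀ n : ℕ, f ((n : ℝ) * t) ≤ (n : ℝ) * f t := by
  intro n
  induction n with
  | zero => simp [modulus_f_zero hf]
  | succ n ih =>
    have h1 : ((n + 1 : ℕ) : ℝ) * t = (n : ℝ) * t + t := by push_cast; ring
    rw [h1]
    have h2 := hf.subadd ((n : ℝ) * t) t (by positivity) ht
    push_cast
    linarith

/-- Lower bound `β * t ≤ f t`. -/
lemma modulus_lower (hf : IsModulus f) {β : ℝ}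
    (hlim : Tendsto (fun t : ℝ => f t / t) atTop (nhds β)) :
    ∀ t, 0 ≤ t → β * t ≤ f t := by
  intro t ht
  rcases eq_or_lt_of_le ht with h | htpos
  · simp [← h, modulus_f_zero hf]
  · have hcomp : Tendsto (fun n : ℕ => (n : ℝ) * t) atTop atTop :=
      (tendsto_natCast_atTop_atTop (R := ℝ)).atTop_mul_const htpos
    have h1 : Tendsto (fun n : ℕ => f ((n : ℝ) * t) / ((n : ℝ) * t)) atTop (nhds β) :=
      hlim.comp hcomp
    have h2 : β ≤ f t / t := by
      refine le_of_tendsto h1 ?_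
      filter_upwards [eventually_ge_atTop 1] with m hm
      have hmpos : (0 : ℝ) < (m : ℝ) := by exact_mod_cast Nat.lt_of_lt_of_le Nat.zero_lt_one hm
      have hmt : (0 : ℝ) < (m : ℝ) * t := by positivity
      have h3 := modulus_nsmul hf t ht m
      have h4 : f ((m : ℝ) * t) / ((m : ℝ) * t) ≤ ((m : ℝ) * f t) / ((m : ℝ) * t) :=
        div_le_div_of_nonneg_right h3 hmt.le
      rwa [mul_div_mul_left _ _ (ne_of_gt hmpos)] at h4
    calc β * t ≤ (f t / t) * t := by
          exact mul_le_mul_of_nonneg_right h2 ht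
      _ = f t := by field_simp

lemma modulus_step (hf : IsModulus f) {δ : ℝ} (hδ : 0 ≤ δ) :
    ∀ n : ℕ, ∀ t, 0 ≤ t → t ≤ ((n : ℝ) + 1) * δ → f t ≤ ((n : ℝ) + 1) * f δ := by
  intro n
  induction n with
  | zero =>
    intro t ht hle
    norm_num at hle ⊢
    exact hf.mono t δ ht hle
  | succ n ih =>
    intro t ht hle
    by_cases h : t ≤ ((n : ℝ) + 1) * δ
    · have := ih t ht h
      have hfδ := hf.nonneg δ hδ
      push_cast
      push_cast at this
      linarith
    · push_neg at h
      have hδle : δ ≤ ((n : ℝ) + 1) * δ := by nlinarith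
      have htδ : 0 ≤ t - δ := by linarith
      have hle2 : t - δ ≤ ((n : ℝ) + 1) * δ := by push_cast at hle; linarith
      have h1 : f t = f ((t - δ) + δ) := by ring_nf
      have h2 := hf.subadd (t - δ) δ htδ hδ
      have h3 := ih (t - δ) htδ hle2
      push_cast
      push_cast at h3
      linarith [h1 ▸ h2]

lemma modulus_pointwise (hf : IsModulus f) {δ ε : ℝ} (hδ : 0 < δ) (hε : 0 ≤ ε)
    (hsmall : ∀ t, 0 ≤ t → t ≤ δ → f t ≤ ε) :
    ∀ t, 0 ≤ t → f t ≤ ε + (2 * f δ / δ) * t := by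
  intro t ht
  have hfδ := hf.nonneg δ hδ.le
  by_cases h : t ≤ δ
  · have h1 := hsmall t ht h
    have h2 : 0 ≤ (2 * f δ / δ) * t := by positivity
    linarith
  · push_neg at h
    set n := ⌊t / δ⌋₊ with hn
    have hn1 : 1 ≤ n := Nat.le_floor (by rw [le_div_iff₀ hδ]; push_cast; linarith)
    have hn1' : (1 : ℝ) ≤ (n : ℝ) := by exact_mod_cast hn1
    have ht2 : t ≤ ((n : ℝ) + 1) * δ := by
      have := Nat.lt_floor_add_one (t / δ)
      rw [div_lt_iff₀ hδ] at this
      linarith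
    have h3 := modulus_step hf hδ.le n t ht ht2
    have hnle : (n : ℝ) ≤ t / δ := Nat.floor_le (by positivity)
    have hnle' : (n : ℝ) * δ ≤ t := by rwa [← le_div_iff₀ hδ]
    have h4 : f t ≤ 2 * (t / δ) * f δ := by
      have : ((n : ℝ) + 1) ≤ 2 * (t / δ) := by
        have : (n : ℝ) + 1 ≤ 2 * (n : ℝ) := by linarith
        linarith [mul_le_mul_of_nonneg_left hnle (by norm_num : (0:ℝ) ≤ 2)]
      nlinarith
    have h5 : 2 * (t / δ) * f δ = (2 * f δ / δ) * t := by ring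
    linarith [h5 ▸ h4]

end Aux

/-- if `lim f(t)/t = β > 0` then `AC_θ(f) = AC_θ`. -/
theorem ACthetaF_eq_ACtheta (f : ℝ → ℝ) (hf : IsModulus f)
    (β : ℝ) (hβ : 0 < β)
    (hlim : Tendsto (fun t : ℝ => f t / t) atTop (nhds β))
    (k : ℕ → ℕ) (hk : StrictMono k)
    (hh : Tendsto (fun r => (k (r + 1) - k r : ℕ)) atTop atTop) :
    {x : ℕ → ℝ | ∃ n : ℕ, ACthetaF f k n x} = {x : ℕ → ℝ | ∃ n : ℕ, ACtheta k n x} := by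
  have hlow := modulus_lower hf hlim
  have hf0 := modulus_f_zero hf
  ext x
  simp only [Set.mem_setOf_eq]
  have hpos : ∀ r : ℕ, 0 < (k (r + 1) - k r : ℕ) := fun r =>
    Nat.sub_pos_of_lt (hk (lt_add_one r))
  have hposR : ∀ r : ℕ, (0 : ℝ) < ((k (r + 1) - k r : ℕ) : ℝ) := fun r => by
    exact_mod_cast hpos r
  constructor
  · rintro ⟨n, hx⟩
    refine ⟨n, ?_⟩
    unfold ACtheta
    unfold ACthetaF at hx
    have hg : Tendsto (fun r => (1 / β) * ((1 / ((k (r + 1) - k r : ℕ) : ℝ)) *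
        ∑ m ∈ Finset.Ioc (k r) (k (r + 1)), f |x m - x (Nat.gcd m n)|)) atTop (nhds 0) := by
      simpa using hx.const_mul (1 / β)
    refine squeeze_zero (fun r => ?_) (fun r => ?_) hg
    · positivity
    · have hsum : ∑ m ∈ Finset.Ioc (k r) (k (r + 1)), |x m - x (Nat.gcd m n)| ≤
          (1 / β) * ∑ m ∈ Finset.Ioc (k r) (k (r + 1)), f |x m - x (Nat.gcd m n)| := by
        rw [Finset.mul_sum]
        refine Finset.sum_le_sum fun m _ => ?_
        have h1 := hlow |x m - x (Nat.gcd m n)| (abs_nonneg _)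
        rw [one_div, ← div_eq_inv_mul, le_div_iff₀ hβ]
        linarith [h1]
      calc (1 / ((k (r + 1) - k r : ℕ) : ℝ)) *
            ∑ m ∈ Finset.Ioc (k r) (k (r + 1)), |x m - x (Nat.gcd m n)|
          ≤ (1 / ((k (r + 1) - k r : ℕ) : ℝ)) * ((1 / β) *
            ∑ m ∈ Finset.Ioc (k r) (k (r + 1)), f |x m - x (Nat.gcd m n)|) := by
            refine mul_le_mul_of_nonneg_left hsum (by positivity)
        _ = (1 / β) * ((1 / ((k (r + 1) - k r : ℕ) : ℝ)) *
            ∑ m ∈ Finset.Ioc (k r) (k (r + 1)), f |x m - x (Nat.gcd m n)|) := by ring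
  · rintro ⟨n, hx⟩
    refine ⟨n, ?_⟩
    unfold ACthetaF
    unfold ACtheta at hx
    rw [Metric.tendsto_atTop]
    intro ε hε
    -- get δ from right continuity
    have hrc := hf.right_cont
    rw [Metric.continuousWithinAt_iff] at hrc
    obtain ⟨δ, hδpos, hδ⟩ := hrc (ε / 2) (by linarith)
    set δ' : ℝ := δ / 2 with hδ'
    have hδ'pos : 0 < δ' := by positivity
    have hsmall : ∀ t, 0 ≤ t → t ≤ δ' → f t ≤ ε / 2 := by
      intro t ht htle
      have h1 : t ∈ Set.Ici (0 : ℝ) := ht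
      have h2 : dist t 0 < δ := by
        rw [Real.dist_eq, sub_zero, abs_of_nonneg ht]; linarith
      have := hδ h1 h2
      rw [Real.dist_eq, hf0, sub_zero, abs_of_nonneg (hf.nonneg t ht)] at this
      linarith
    set C : ℝ := 2 * f δ' / δ' with hC
    have hC0 : 0 ≤ C := by
      have := hf.nonneg δ' hδ'pos.le
      positivity
    have hpw := modulus_pointwise hf hδ'pos (by linarith : (0:ℝ) ≤ ε / 2) hsmall
    -- eventually the averages of |x m - ...| are small
    rw [Metric.tendsto_atTop] at hx
    obtain ⟨N, hN⟩ := hx (ε / (2 * (C + 1))) (by positivity)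
    refine ⟨N, fun r hr => ?_⟩
    have hbr := hN r hr
    set b : ℝ := (1 / ((k (r + 1) - k r : ℕ) : ℝ)) *
      ∑ m ∈ Finset.Ioc (k r) (k (r + 1)), |x m - x (Nat.gcd m n)| with hb
    have hb0 : 0 ≤ b := by positivity
    rw [Real.dist_eq, sub_zero, abs_of_nonneg hb0] at hbr
    set a : ℝ := (1 / ((k (r + 1) - k r : ℕ) : ℝ)) *
      ∑ m ∈ Finset.Ioc (k r) (k (r + 1)), f |x m - x (Nat.gcd m n)| with ha
    have ha0 : 0 ≤ a := by
      have : ∀ m ∈ Finset.Ioc (k r) (k (r + 1)), 0 ≤ f |x m - x (Nat.gcd m n)| :=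
        fun m _ => hf.nonneg _ (abs_nonneg _)
      have hs := Finset.sum_nonneg this
      positivity
    have hcard : (Finset.Ioc (k r) (k (r + 1))).card = k (r + 1) - k r := Nat.card_Ioc _ _
    have hsum : ∑ m ∈ Finset.Ioc (k r) (k (r + 1)), f |x m - x (Nat.gcd m n)| ≤
        (ε / 2) * ((k (r + 1) - k r : ℕ) : ℝ) +
          C * ∑ m ∈ Finset.Ioc (k r) (k (r + 1)), |x m - x (Nat.gcd m n)| := by
      calc ∑ m ∈ Finset.Ioc (k r) (k (r + 1)), f |x m - x (Nat.gcd m n)|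
          ≤ ∑ m ∈ Finset.Ioc (k r) (k (r + 1)), (ε / 2 + C * |x m - x (Nat.gcd m n)|) :=
            Finset.sum_le_sum fun m _ => hpw _ (abs_nonneg _)
        _ = (ε / 2) * ((k (r + 1) - k r : ℕ) : ℝ) +
            C * ∑ m ∈ Finset.Ioc (k r) (k (r + 1)), |x m - x (Nat.gcd m n)| := by
            rw [Finset.sum_add_distrib, Finset.sum_const, ← Finset.mul_sum, hcard]
            push_cast
            ring
    have hab : a ≤ ε / 2 + C * b := by
      rw [ha, hb]
      have h1 : (0 : ℝ) ≤ 1 / ((k (r + 1) - k r : ℕ) : ℝ) := by positivity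
      calc (1 / ((k (r + 1) - k r : ℕ) : ℝ)) *
            ∑ m ∈ Finset.Ioc (k r) (k (r + 1)), f |x m - x (Nat.gcd m n)|
          ≤ (1 / ((k (r + 1) - k r : ℕ) : ℝ)) *
            ((ε / 2) * ((k (r + 1) - k r : ℕ) : ℝ) +
              C * ∑ m ∈ Finset.Ioc (k r) (k (r + 1)), |x m - x (Nat.gcd m n)|) :=
            mul_le_mul_of_nonneg_left hsum h1
        _ = ε / 2 + C * ((1 / ((k (r + 1) - k r : ℕ) : ℝ)) *
            ∑ m ∈ Finset.Ioc (k r) (k (r + 1)), |x m - x (Nat.gcd m n)|) := by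
            rw [mul_add]
            congr 1
            · rw [mul_comm (ε / 2), ← mul_assoc, one_div, inv_mul_cancel₀ (hposR r).ne',
                one_mul]
            · ring
    have hCb : C * b < ε / 2 := by
      have h1 : C * b ≤ (C + 1) * b := by nlinarith
      have h2 : (C + 1) * b < (C + 1) * (ε / (2 * (C + 1))) :=
        mul_lt_mul_of_pos_left hbr (by linarith)
      have h3 : (C + 1) * (ε / (2 * (C + 1))) = ε / 2 := by
        field_simp
      linarith
    rw [Real.dist_eq, sub_zero, abs_of_nonneg ha0]
    calc a ≤ ε / 2 + C * b := hab
      _ < ε := by linarith
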